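/- (Theorem 1.) Assume Condition (9), i.e., R_s/R_D2D < P_s/(P_Rx + P_Tx). Then the coalitional game (N, v) with the multi-file value function v(S) = ∑_{m=1}^M ( ∑_{i ∈ S ∩ D_m} U_{i,m} − a·X_m·C_m(S) ) has a nonempty core: there exists a payoff vector x : N → ℝ with ∑_{i∈N} x_i = v(N) and ∑_{i∈S} x_i ≥ v(S) for every coalition S ⊆ N. -/

import Mathlib

open Finset

/-- The per-unit-size minimum energy cost `C_m(S)` of a coalition `S` for a file
requested by the users in `D`. -/
noncomputable def Ccost {α : Type*} [DecidableEq α]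
    (Ps Rs PTx PRx RD2D : ℝ) (D S : Finset α) : ℝ :=
  if (S ∩ D) = ∅ then 0
  else if (S ∩ D).card = 1 then Ps / Rs
  else Ps / Rs + PTx / RD2D + (((S ∩ D).card : ℝ) - 1) * (PRx / RD2D)

noncomputable def fcost (A B C : ℝ) (k : ℕ) : ℝ :=
  if k = 0 then 0 else if k = 1 then A else A + B + ((k : ℝ) - 1) * C

lemma Ccost_eq_fcost {α : Type*} [DecidableEq α]
    (Ps Rs PTx PRx RD2D : ℝ) (D S : Finset α) :
    Ccost Ps Rs PTx PRx RD2D D S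
      = fcost (Ps / Rs) (PTx / RD2D) (PRx / RD2D) (S ∩ D).card := by
  simp only [Ccost, fcost, Finset.card_eq_zero]

lemma fcost_two_add (A B C : ℝ) (k : ℕ) :
    fcost A B C (k + 2) = A + B + ((k : ℝ) + 1) * C := by
  unfold fcost
  rw [if_neg (by omega), if_neg (by omega)]
  push_cast
  ring

lemma avg_le (A B C : ℝ) (hA : 0 < A) (hB : 0 < B) (hC : 0 < C) (hBC : B + C < A)
    (k n : ℕ) (hkn : k ≤ n) :
    (k : ℝ) * fcost A B C n ≤ (n : ℝ) * fcost A B C k := by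
  have hCA : C < A := by linarith
  rcases k with _ | _ | k
  · simp [fcost]
  · rcases n with _ | _ | n
    · omega
    · simp
    · rw [fcost_two_add]
      have hn : (0:ℝ) ≤ (n : ℝ) := Nat.cast_nonneg n
      simp only [fcost, Nat.cast_one, if_neg (by omega : ¬(1 = 0)), if_pos rfl]
      push_cast
      nlinarith [mul_nonneg hn (by linarith : (0:ℝ) ≤ A - C)]
  · rcases n with _ | _ | n
    · omega
    · omega
    · rw [fcost_two_add, fcost_two_add]
      have hkn' : (k:ℝ) ≤ n := by exact_mod_cast (by omega : k ≤ n)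
      push_cast
      nlinarith [mul_nonneg (by linarith : (0:ℝ) ≤ (n:ℝ) - k)
        (by linarith : (0:ℝ) ≤ A + B - C)]

/-- Theorem 1: under Condition (9), the coalitional game `(N, v)` with the
multi-file value function `v(S) = ∑_m ( ∑_{i ∈ S ∩ D_m} U_{i,m} − a·X_m·C_m(S) )` has a
nonempty core. -/
theorem multifile_core_nonempty
    {α : Type*} [Fintype α] [DecidableEq α] [Nonempty α]
    (Ps Rs PTx PRx RD2D : ℝ)
    (hPs : 0 < Ps) (hRs : 0 < Rs) (hPTx : 0 < PTx) (hPRx : 0 < PRx)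
    (hRD2D : 0 < RD2D)
    (h9 : Rs / RD2D < Ps / (PRx + PTx))
    (M : ℕ) (X : Fin M → ℝ) (hX : ∀ m, 0 < X m)
    (Dm : Fin M → Finset α) (U : α → Fin M → ℝ)
    (a : ℝ) (ha : 0 < a)
    (v : Finset α → ℝ)
    (hv : ∀ S : Finset α,
      v S = ∑ m : Fin M,
        ((∑ i ∈ S ∩ Dm m, U i m) - a * X m * Ccost Ps Rs PTx PRx RD2D (Dm m) S)) :
    ∃ x : α → ℝ,
      (∑ i, x i = v Finset.univ) ∧
      (∀ S : Finset α, ∑ i ∈ S, x i ≥ v S) := by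
  set A := Ps / Rs with hAdef
  set B := PTx / RD2D with hBdef
  set C := PRx / RD2D with hCdef
  have hA : 0 < A := div_pos hPs hRs
  have hB : 0 < B := div_pos hPTx hRD2D
  have hC : 0 < C := div_pos hPRx hRD2D
  have hBC : B + C < A := by
    rw [hBdef, hCdef, hAdef, ← add_div, div_lt_div_iff₀ hRD2D hRs]
    rw [div_lt_div_iff₀ hRD2D (add_pos hPRx hPTx)] at h9
    nlinarith
  -- per-file cost share
  set t : Fin M → ℝ := fun m =>
    a * X m * fcost A B C (Dm m).card / (Dm m).card with ht
  refine ⟨fun i => ∑ m : Fin M, (if i ∈ Dm m then U i m - t m else 0), ?_, ?_⟩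
  · rw [hv]
    rw [Finset.sum_comm]
    refine Finset.sum_congr rfl fun m _ => ?_
    rw [Finset.sum_ite_mem, Finset.univ_inter,
      Finset.sum_sub_distrib, Finset.sum_const, nsmul_eq_mul,
      Ccost_eq_fcost, Finset.univ_inter]
    rcases Nat.eq_zero_or_pos (Dm m).card with h0 | hpos
    · rw [h0]
      simp [fcost]
    · have hne : ((Dm m).card : ℝ) ≠ 0 := by positivity
      rw [ht]
      field_simp
      rfl
  · intro S
    rw [hv, Finset.sum_comm]
    refine Finset.sum_le_sum fun m _ => ?_
    rw [Finset.sum_ite_mem, Finset.sum_sub_distrib, Finset.sum_const, nsmul_eq_mul,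
      Ccost_eq_fcost]
    have hsub : (S ∩ Dm m).card ≤ (Dm m).card :=
      Finset.card_le_card (Finset.inter_subset_right)
    have key : ((S ∩ Dm m).card : ℝ) * t m
        ≤ a * X m * fcost A B C (S ∩ Dm m).card := by
      rcases Nat.eq_zero_or_pos (Dm m).card with h0 | hpos
      · have h1 : (S ∩ Dm m).card = 0 := by omega
        simp only [ht, h1, h0]
        simp [fcost]
      · have hne : (0:ℝ) < ((Dm m).card : ℝ) := by positivity
        have hk := avg_le A B C hA hB hC hBC _ _ hsub
        have haX : (0:ℝ) < a * X m := mul_pos ha (hX m)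
        simp only [ht]
        rw [mul_div_assoc', div_le_iff₀ hne]
        nlinarith [mul_le_mul_of_nonneg_left hk haX.le]
    linarith
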